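/- Let X_7 and X_8 be the minimal Toeplitz subshifts associated to w_7 and w_8 respectively. Then the product subshift X = X_7 ⊗ X_8 ⊆ ({1,...,6}×{1,...,7})^Z, consisting of configurations c_1 ⊗ c_2 with c_i ∈ X_i, is minimal. -/

import Mathlib

/-- The word `w` occurs in the bi-infinite configuration `c` at position `i`. -/
def OccursAt {α : Type*} (w : List α) (c : ℤ → α) (i : ℤ) : Prop :=
  ∀ j : Fin w.length, c (i + (j : ℕ)) = w.get j

/-- The word `w` appears (somewhere) in `c`. -/
def AppearsIn {α : Type*} (w : List α) (c : ℤ → α) : Prop :=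
  ∃ i : ℤ, OccursAt w c i

/-- `w` is in the language of the set of configurations `X`. -/
def InLang {α : Type*} (X : Set (ℤ → α)) (w : List α) : Prop :=
  ∃ c ∈ X, AppearsIn w c

/-- `X` is minimal: every word of its language appears in every configuration of `X`. -/
def MinimalLang {α : Type*} (X : Set (ℤ → α)) : Prop :=
  ∀ w : List α, InLang X w → ∀ c ∈ X, AppearsIn w c

/-- The set of configurations avoiding every word of `Fw`. -/
def Avoiders {α : Type*} (Fw : Set (List α)) : Set (ℤ → α) :=
  {c | ∀ w ∈ Fw, ¬ AppearsIn w c}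

/-- `c` is periodic (its shift orbit is finite). -/
def PeriodicConf {α : Type*} (c : ℤ → α) : Prop :=
  ∃ p : ℤ, p ≠ 0 ∧ ∀ i : ℤ, c (i + p) = c i

/-- `X` is shift-invariant. -/
def ShiftInv {α : Type*} (X : Set (ℤ → α)) : Prop :=
  ∀ c ∈ X, (fun i => c (i + 1)) ∈ X ∧ (fun i => c (i - 1)) ∈ X

/-- `X` is a subshift: closed (for the product of discrete topologies) and
shift-invariant. -/
def IsSubshift {α : Type*} (X : Set (ℤ → α)) : Prop :=
  @IsClosed _ (@Pi.topologicalSpace ℤ (fun _ => α) (fun _ => ⊥)) X ∧ ShiftInv X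

/-- The first nonzero digit in the base-`p` expansion of `n` (reading from the least
significant digit): `(n / p^k) % p` where `p^k` is the largest power of `p` dividing `n`. -/
def firstDigit (p n : ℕ) : ℕ := (n / p ^ padicValNat p n) % p

/-- The Toeplitz-type word `w_p`: its `i`-th letter is the first nonzero base-`p` digit
of `i + 1`. -/
def wp (p : ℕ) (i : ℕ) : ℕ := firstDigit p (i + 1)

/-- The finite word `w` occurs in `w_p` at position `i`. -/
def OccursAtW (p : ℕ) (w : List ℕ) (i : ℕ) : Prop :=
  ∀ j : Fin w.length, wp p (i + (j : ℕ)) = w.get j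

/-- The subshift `X_p`: all bi-infinite configurations all of whose finite factors are
factors of `w_p`. -/
def Xp (p : ℕ) : Set (ℤ → ℕ) :=
  {c | ∀ (i : ℤ) (n : ℕ), ∃ m : ℕ, ∀ j : ℕ, j < n → c (i + (j : ℕ)) = wp p (m + j)}

/-- The product subshift `X_7 ⊗ X_8`. -/
def XProd78 : Set (ℤ → ℕ × ℕ) :=
  {c | (fun i => (c i).1) ∈ Xp 7 ∧ (fun i => (c i).2) ∈ Xp 8}


lemma padicValNat_eq_of {p n v : ℕ} (hp : 2 ≤ p) (hn : n ≠ 0)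
    (hd : p ^ v ∣ n) (hnd : ¬ p ^ (v + 1) ∣ n) : padicValNat p n = v := by
  rw [padicValNat_def' (by omega) hn]
  exact multiplicity_eq_of_dvd_of_not_dvd hd hnd

lemma firstDigit_of_not_dvd {p n : ℕ} (hp : 2 ≤ p) (h : ¬ p ∣ n) :
    firstDigit p n = n % p := by
  have hn : n ≠ 0 := by rintro rfl; exact h (dvd_zero p)
  have : padicValNat p n = 0 := padicValNat_eq_of hp hn (by simp) (by simpa using h)
  simp [firstDigit, this]

lemma not_pow_succ_dvd {p n : ℕ} (hp : 2 ≤ p) (hn : n ≠ 0) :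
    ¬ p ^ (padicValNat p n + 1) ∣ n := by
  intro h
  have hfin : FiniteMultiplicity p n :=
    Nat.finiteMultiplicity_iff.2 ⟨by omega, Nat.pos_of_ne_zero hn⟩
  have := hfin.le_multiplicity_of_pow_dvd h
  rw [← padicValNat_def' (by omega) hn] at this
  omega

lemma firstDigit_mul {p n : ℕ} (hp : 2 ≤ p) (hn : n ≠ 0) :
    firstDigit p (p * n) = firstDigit p n := by
  set v := padicValNat p n with hv
  have hd : p ^ v ∣ n := pow_padicValNat_dvd
  have hnd : ¬ p ^ (v + 1) ∣ n := not_pow_succ_dvd hp hn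
  have hval : padicValNat p (p * n) = v + 1 := by
    apply padicValNat_eq_of hp (by positivity)
    · rw [pow_succ']; exact mul_dvd_mul_left p hd
    · rw [pow_succ']
      intro h
      exact hnd ((mul_dvd_mul_iff_left (by omega : p ≠ 0)).1 h)
  rw [firstDigit, hval, pow_succ', firstDigit]
  rw [Nat.mul_div_mul_left _ _ (by omega : 0 < p)]

lemma firstDigit_periodic {p : ℕ} (hp : 2 ≤ p) :
    ∀ n K t : ℕ, n % p ^ K ≠ 0 → firstDigit p (n + t * p ^ K) = firstDigit p n := by
  intro n
  induction n using Nat.strong_induction_on with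
  | _ n ih =>
    intro K t hn
    have hK : K ≠ 0 := by rintro rfl; exact hn (Nat.mod_one n)
    have hn0 : n ≠ 0 := by rintro rfl; simp at hn
    by_cases hdvd : p ∣ n
    · obtain ⟨n', rfl⟩ := hdvd
      have hn' : n' ≠ 0 := by rintro rfl; simp at hn0
      have hK1 : p ^ K = p * p ^ (K - 1) := by
        conv_lhs => rw [← Nat.succ_pred_eq_of_pos (Nat.pos_of_ne_zero hK)]
        rw [pow_succ', Nat.pred_eq_sub_one]
      have hmod : n' % p ^ (K - 1) ≠ 0 := by
        intro h
        apply hn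
        have : p ^ (K - 1) ∣ n' := Nat.dvd_of_mod_eq_zero h
        have hdk : p ^ K ∣ p * n' := by rw [hK1]; exact mul_dvd_mul_left p this
        obtain ⟨u, hu⟩ := hdk
        rw [hu, Nat.mul_mod_right]
      have key : p * n' + t * p ^ K = p * (n' + t * p ^ (K - 1)) := by
        rw [Nat.mul_add, hK1]; ring
      rw [key, firstDigit_mul hp (by positivity), firstDigit_mul hp hn']
      exact ih n' (by nlinarith [Nat.pos_of_ne_zero hn']) (K - 1) t hmod
    · have h2 : ¬ p ∣ n + t * p ^ K := by
        intro h
        apply hdvd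
        have hpk : p ∣ t * p ^ K := Dvd.dvd.mul_left (dvd_pow_self p hK) t
        exact (Nat.dvd_add_right hpk).mp (by rwa [Nat.add_comm] at h)
      rw [firstDigit_of_not_dvd hp h2, firstDigit_of_not_dvd hp hdvd]
      obtain ⟨u, hu⟩ : p ∣ t * p ^ K := Dvd.dvd.mul_left (dvd_pow_self p hK) t
      rw [hu, Nat.add_mul_mod_self_left]

lemma wp_periodic {p : ℕ} (hp : 2 ≤ p) {j K : ℕ} (hj : j + 1 < p ^ K) (t : ℕ) :
    wp p (j + t * p ^ K) = wp p j := by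
  have : j + t * p ^ K + 1 = (j + 1) + t * p ^ K := by ring
  rw [wp, this, firstDigit_periodic hp (j + 1) K t (by rw [Nat.mod_eq_of_lt hj]; omega)]
  rfl

lemma wp_small {p j : ℕ} (hp : 2 ≤ p) (hj : j + 1 < p) : wp p j = j + 1 := by
  rw [wp, firstDigit_of_not_dvd hp
    (by intro h; have := Nat.le_of_dvd (by omega) h; omega)]
  exact Nat.mod_eq_of_lt hj

lemma wp_hole {p : ℕ} (hp : 2 ≤ p) (t : ℕ) : wp p (p * t + (p - 1)) = wp p t := by
  have h1 : p * t + (p - 1) + 1 = p * (t + 1) := by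
    rw [Nat.mul_add, Nat.mul_one]
    have h := Nat.le_refl (p * t)
    omega
  rw [wp, h1, firstDigit_mul hp (by omega)]
  rfl

lemma rigid {p : ℕ} (hp : 3 ≤ p) :
    ∀ K m : ℕ, (∀ j : ℕ, j < p ^ K - 1 → wp p (m + j) = wp p j) → p ^ K ∣ m := by
  intro K
  induction K with
  | zero => intro m _; simp
  | succ K ih =>
    intro m h
    have hbig : p ≤ p ^ (K + 1) := Nat.le_self_pow (by omega) p
    have w0 : wp p 0 = 1 := by rw [wp_small (by omega) (by omega)]
    have w1 : wp p 1 = 2 := by rw [wp_small (by omega) (by omega)]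
    have h0 := h 0 (by omega)
    have h1 := h 1 (by omega)
    rw [w0, Nat.add_zero] at h0
    rw [w1] at h1
    -- h0 : wp p m = 1, h1 : wp p (m + 1) = 2
    have hm : p ∣ m := by
      by_cases hc : p ∣ m + 1
      · exfalso
        have hnd : ¬ p ∣ m + 1 + 1 := by
          intro h'
          have := Nat.dvd_sub h' hc
          simp at this; omega
        rw [wp, firstDigit_of_not_dvd (by omega) hnd] at h1
        obtain ⟨u, hu⟩ := hc
        rw [show m + 1 + 1 = 1 + p * u by omega, Nat.add_mul_mod_self_left,
          Nat.mod_eq_of_lt (by omega)] at h1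
        omega
      · rw [wp, firstDigit_of_not_dvd (by omega) hc] at h0
        have h2 := Nat.mod_add_div (m + 1) p
        exact ⟨(m + 1) / p, by omega⟩
    obtain ⟨m', rfl⟩ := hm
    have hsub : ∀ j' : ℕ, j' < p ^ K - 1 → wp p (m' + j') = wp p j' := by
      intro j' hj'
      have hpK : 1 ≤ p ^ K := Nat.one_le_pow _ _ (by omega)
      have hj : p * j' + (p - 1) < p ^ (K + 1) - 1 := by
        have h3 : p * (j' + 1) ≤ p * (p ^ K - 1) := Nat.mul_le_mul_left p (by omega)
        have hpp : p * (p ^ K - 1) = p ^ (K + 1) - p := by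
          rw [Nat.mul_sub, Nat.mul_one, pow_succ, Nat.mul_comm]
        have e2 : p * (j' + 1) = p * j' + p := by ring
        omega
      have hh := h (p * j' + (p - 1)) hj
      have e1 : p * m' + (p * j' + (p - 1)) = p * (m' + j') + (p - 1) := by
        rw [Nat.mul_add]; omega
      rw [e1, wp_hole (by omega), wp_hole (by omega)] at hh
      exact hh
    obtain ⟨m'', rfl⟩ := ih m' hsub
    exact ⟨m'', by rw [pow_succ]; ring⟩

lemma occurs {p : ℕ} (hp : 3 ≤ p) {c : ℤ → ℕ} (hc : c ∈ Xp p) (K : ℕ) :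
    ∃ i0 : ℤ, ∀ t : ℤ, ∀ j : ℕ, j < p ^ K - 1 → c (i0 + t * p ^ K + j) = wp p j := by
  have hpK : 0 < p ^ K := Nat.pow_pos (by omega)
  -- step 1 : one occurrence
  obtain ⟨m', hm'⟩ := hc 0 (3 * p ^ K)
  obtain ⟨q, d, hqd, hd1, hd2⟩ : ∃ q d : ℕ, m' + d = q * p ^ K ∧ d ≤ p ^ K ∧ 0 < q := by
    have h1 : m' < m' / p ^ K * p ^ K + p ^ K := Nat.lt_div_mul_add hpK
    have h2 : m' / p ^ K * p ^ K ≤ m' := Nat.div_mul_le_self _ _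
    refine ⟨m' / p ^ K + 1, (m' / p ^ K + 1) * p ^ K - m', ?_, ?_, Nat.succ_pos _⟩ <;>
    · have h3 : (m' / p ^ K + 1) * p ^ K = m' / p ^ K * p ^ K + p ^ K := by
        rw [Nat.add_mul, Nat.one_mul]
      omega
  have hfirst : ∀ j : ℕ, j < p ^ K - 1 → c ((d : ℤ) + j) = wp p j := by
    intro j hj
    have hlt : d + j < 3 * p ^ K := by omega
    have h4 := hm' (d + j) hlt
    rw [show (0 : ℤ) + ((d + j : ℕ) : ℤ) = (d : ℤ) + j by push_cast; ring] at h4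
    rw [h4, show m' + (d + j) = j + q * p ^ K by omega, wp_periodic (by omega) (by omega) q]
  refine ⟨(d : ℤ), ?_⟩
  intro t j hj
  -- step 2 : transfer along t
  obtain ⟨s, hs1, hs2⟩ : ∃ s : ℕ, -(s : ℤ) ≤ t ∧ t ≤ (s : ℤ) :=
    ⟨t.natAbs, by omega, by omega⟩
  obtain ⟨m'', hm''⟩ := hc ((d : ℤ) - (s * p ^ K : ℕ)) ((2 * s + 1) * p ^ K)
  have hexp : (2 * s + 1) * p ^ K = 2 * (s * p ^ K) + p ^ K := by ring
  have hdvd : p ^ K ∣ m'' + s * p ^ K := by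
    apply rigid hp K
    intro j' hj'
    have hlt : s * p ^ K + j' < (2 * s + 1) * p ^ K := by omega
    have h4 := hm'' (s * p ^ K + j') hlt
    rw [show (d : ℤ) - (s * p ^ K : ℕ) + ((s * p ^ K + j' : ℕ) : ℤ) = (d : ℤ) + j' by
      push_cast; ring] at h4
    rw [show m'' + (s * p ^ K + j') = m'' + s * p ^ K + j' by ring] at h4
    rw [← h4, hfirst j' hj']
  set b : ℕ := (t + s).toNat * p ^ K with hb
  have hts : ((t + s).toNat : ℤ) = t + s := Int.toNat_of_nonneg (by omega)
  have hble : b ≤ 2 * (s * p ^ K) := by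
    rw [hb, show 2 * (s * p ^ K) = (2 * s) * p ^ K by ring]
    exact Nat.mul_le_mul_right _ (by omega)
  have hdvd2 : ∃ e : ℕ, m'' + b = e * p ^ K := by
    have h5 : p ^ K ∣ s * p ^ K := dvd_mul_left _ _
    have h6 : p ^ K ∣ b := dvd_mul_left _ _
    have h7 : p ^ K ∣ m'' := by
      have := Nat.dvd_sub hdvd h5
      simpa using this
    obtain ⟨e, he⟩ := Nat.dvd_add h7 h6
    exact ⟨e, by rw [he, Nat.mul_comm]⟩
  obtain ⟨e, he⟩ := hdvd2
  have hlt : b + j < (2 * s + 1) * p ^ K := by omega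
  have h7 := hm'' (b + j) hlt
  rw [show (d : ℤ) - (s * p ^ K : ℕ) + ((b + j : ℕ) : ℤ) = (d : ℤ) + t * p ^ K + j by
    rw [hb]; push_cast [hts]; ring] at h7
  rw [h7, show m'' + (b + j) = j + e * p ^ K by omega,
    wp_periodic (by omega) (by omega) e]

/-- The product subshift `X = X_7 ⊗ X_8` is minimal: every finite factor of a
configuration of `X` appears in every configuration of `X`. -/
theorem stmt11 :
    ∀ c ∈ XProd78, ∀ c' ∈ XProd78, ∀ (i : ℤ) (n : ℕ),
      ∃ i' : ℤ, ∀ j : ℕ, j < n → c' (i' + (j : ℕ)) = c (i + (j : ℕ)) := by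
  intro c hc c' hc' i n
  obtain ⟨hc1, hc2⟩ := hc
  obtain ⟨hc1', hc2'⟩ := hc'
  obtain ⟨m1, hm1⟩ := hc1 i n
  obtain ⟨m2, hm2⟩ := hc2 i n
  set K : ℕ := m1 + n + 1 with hKdef
  set L : ℕ := m2 + n + 1 with hLdef
  have hK : m1 + n + 1 ≤ 7 ^ K := le_of_lt (Nat.lt_pow_self (by norm_num))
  have hL : m2 + n + 1 ≤ 8 ^ L := le_of_lt (Nat.lt_pow_self (by norm_num))
  obtain ⟨i1, hi1⟩ := occurs (by norm_num) hc1' K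
  obtain ⟨i2, hi2⟩ := occurs (by norm_num) hc2' L
  have hcop : IsCoprime ((7 : ℤ) ^ K) ((8 : ℤ) ^ L) :=
    (Int.isCoprime_iff_gcd_eq_one.2 (by norm_num)).pow
  obtain ⟨u, v, huv⟩ := hcop
  set D : ℤ := (i2 + m2) - (i1 + m1) with hD
  refine ⟨i1 + m1 + (u * D) * (7 : ℤ) ^ K, ?_⟩
  have key : i1 + m1 + (u * D) * (7 : ℤ) ^ K = i2 + m2 + (-(v * D)) * (8 : ℤ) ^ L := by
    linear_combination D * huv
  intro j hj
  have e1 := hi1 (u * D) (m1 + j) (by omega)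
  have e2 := hi2 (-(v * D)) (m2 + j) (by omega)
  push_cast at e1 e2
  have p1 : (c' (i1 + m1 + (u * D) * (7 : ℤ) ^ K + (j : ℕ))).1 = (c (i + (j : ℕ))).1 := by
    rw [show i1 + m1 + (u * D) * (7 : ℤ) ^ K + (j : ℕ)
        = i1 + (u * D) * (7 : ℤ) ^ K + ((m1 : ℤ) + (j : ℤ)) by push_cast; ring]
    rw [e1]
    have := hm1 j hj
    simp only at this
    rw [this]
  have p2 : (c' (i1 + m1 + (u * D) * (7 : ℤ) ^ K + (j : ℕ))).2 = (c (i + (j : ℕ))).2 := by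
    rw [show i1 + m1 + (u * D) * (7 : ℤ) ^ K + (j : ℕ)
        = i2 + (-(v * D)) * (8 : ℤ) ^ L + ((m2 : ℤ) + (j : ℤ)) by
      rw [key]; push_cast; ring]
    rw [e2]
    have := hm2 j hj
    simp only at this
    rw [this]
  exact Prod.ext p1 p2
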